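/- Let F1, F2 be cdfs of square-integrable distributions with positive variance, U ~ Unif([0,1]), and (B1,B2) Bernoulli(1/2) random variables independent of U with P(B1=B2) = λ. Define Xi = Bi·Fi⁻¹(U) + (1−Bi)·Fi⁻¹(1−U) for i=1,2. Then Corr(X1,X2) = λ·ρ⁺ + (1−λ)·ρ⁻, where ρ⁺ = Corr(F1⁻¹(U), F2⁻¹(U)) and ρ⁻ = Corr(F1⁻¹(U), F2⁻¹(1−U)). -/

import Mathlib

open MeasureTheory ProbabilityTheory

/-- Pseudoinverse of a cdf. -/
noncomputable def pinv (F : ℝ → ℝ) (u : ℝ) : ℝ := sInf {x | u ≤ F x}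

/-- Pearson correlation of two real random variables. -/
noncomputable def corr {Ω : Type*} [MeasureSpace Ω] (X Y : Ω → ℝ) : ℝ :=
  ((∫ ω, X ω * Y ω) - (∫ ω, X ω) * (∫ ω, Y ω)) /
    (Real.sqrt (variance X ℙ) * Real.sqrt (variance Y ℙ))

section Aux

lemma map_one_sub_volume : Measure.map (fun x : ℝ => 1 - x) volume = volume := by
  have h1 : Measure.map (fun x : ℝ => -x) volume = volume := Measure.map_neg_eq_self volume
  have h2 : Measure.map (fun x : ℝ => 1 + x) volume = volume :=
    Measure.IsAddLeftInvariant.map_add_left_eq_self 1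
  have h3 : (fun x : ℝ => 1 - x) = (fun x : ℝ => 1 + x) ∘ (fun x : ℝ => -x) := by
    ext x; simp [sub_eq_add_neg]
  rw [h3, ← Measure.map_map (by fun_prop) (by fun_prop), h1, h2]

lemma map_one_sub_restrict :
    Measure.map (fun x : ℝ => 1 - x) (volume.restrict (Set.Icc (0:ℝ) 1))
      = volume.restrict (Set.Icc (0:ℝ) 1) := by
  have hm : Measurable (fun x : ℝ => 1 - x) := by fun_prop
  have hpre : (fun x : ℝ => 1 - x) ⁻¹' Set.Icc (0:ℝ) 1 = Set.Icc (0:ℝ) 1 := by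
    ext x
    simp only [Set.mem_preimage, Set.mem_Icc]
    constructor <;> intro h <;> constructor <;> linarith [h.1, h.2]
  calc Measure.map (fun x : ℝ => 1 - x) (volume.restrict (Set.Icc (0:ℝ) 1))
      = Measure.map (fun x : ℝ => 1 - x)
          (volume.restrict ((fun x : ℝ => 1 - x) ⁻¹' Set.Icc (0:ℝ) 1)) := by rw [hpre]
    _ = (Measure.map (fun x : ℝ => 1 - x) volume).restrict (Set.Icc (0:ℝ) 1) :=
        (Measure.restrict_map hm measurableSet_Icc).symm
    _ = volume.restrict (Set.Icc (0:ℝ) 1) := by rw [map_one_sub_volume]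

lemma pinv_monotoneOn {F : ℝ → ℝ} (hmono : Monotone F)
    (hbot : Filter.Tendsto F Filter.atBot (nhds 0))
    (htop : Filter.Tendsto F Filter.atTop (nhds 1)) :
    MonotoneOn (pinv F) (Set.Ioo 0 1) := by
  intro u hu v hv huv
  have hne : {x | v ≤ F x}.Nonempty := by
    obtain ⟨x, hx⟩ := (htop.eventually (eventually_gt_nhds hv.2)).exists
    exact ⟨x, hx.le⟩
  have hbdd : BddBelow {x | u ≤ F x} := by
    obtain ⟨x0, hx0⟩ := (hbot.eventually (eventually_lt_nhds hu.1)).exists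
    refine ⟨x0, fun x hx => ?_⟩
    exact le_of_not_gt fun hlt => absurd (hx.trans (hmono hlt.le)) (not_le.mpr hx0)
  exact csInf_le_csInf hbdd hne fun x hx => le_trans huv hx

lemma pinv_aemeasurable {F : ℝ → ℝ} (hmono : Monotone F)
    (hbot : Filter.Tendsto F Filter.atBot (nhds 0))
    (htop : Filter.Tendsto F Filter.atTop (nhds 1)) :
    AEMeasurable (pinv F) (volume.restrict (Set.Icc (0:ℝ) 1)) := by
  have h := aemeasurable_restrict_of_monotoneOn (μ := volume) measurableSet_Ioo
    (pinv_monotoneOn hmono hbot htop)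
  rwa [Measure.restrict_congr_set Ioo_ae_eq_Icc] at h

lemma integrable_mul_of_memℒp_two {Ω : Type*} [MeasureSpace Ω] {f g : Ω → ℝ}
    (hf : MemLp f 2 ℙ) (hg : MemLp g 2 ℙ) : Integrable (fun ω => f ω * g ω) ℙ := by
  refine (hf.integrable_sq.add hg.integrable_sq).mono'
    (hf.aestronglyMeasurable.mul hg.aestronglyMeasurable) ?_
  filter_upwards with ω
  simp only [Real.norm_eq_abs, abs_mul, Pi.add_apply]
  nlinarith [sq_nonneg (|f ω| - |g ω|), sq_abs (f ω), sq_abs (g ω),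
    abs_nonneg (f ω), abs_nonneg (g ω)]

end Aux

theorem stmt18 {Ω : Type*} [MeasureSpace Ω] [IsProbabilityMeasure (ℙ : Measure Ω)]
    (F1 F2 : ℝ → ℝ)
    (hmono1 : Monotone F1) (hrc1 : ∀ x, ContinuousWithinAt F1 (Set.Ici x) x)
    (hbot1 : Filter.Tendsto F1 Filter.atBot (nhds 0))
    (htop1 : Filter.Tendsto F1 Filter.atTop (nhds 1))
    (hmono2 : Monotone F2) (hrc2 : ∀ x, ContinuousWithinAt F2 (Set.Ici x) x)
    (hbot2 : Filter.Tendsto F2 Filter.atBot (nhds 0))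
    (htop2 : Filter.Tendsto F2 Filter.atTop (nhds 1))
    (U : Ω → ℝ) (hU : Measurable U)
    (hUdist : Measure.map U ℙ = volume.restrict (Set.Icc 0 1))
    (B1 B2 : Ω → Bool) (hB1 : Measurable B1) (hB2 : Measurable B2)
    (hB1dist : ℙ {ω | B1 ω = true} = 1/2) (hB2dist : ℙ {ω | B2 ω = true} = 1/2)
    (lam : ℝ) (hlam : lam ∈ Set.Icc (0:ℝ) 1)
    (hconc : ℙ {ω | B1 ω = B2 ω} = ENNReal.ofReal lam)
    (hindep : IndepFun (fun ω => (B1 ω, B2 ω)) U ℙ)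
    (hL2₁ : MemLp (fun ω => pinv F1 (U ω)) 2 ℙ)
    (hL2₂ : MemLp (fun ω => pinv F2 (U ω)) 2 ℙ)
    (hvar1 : 0 < variance (fun ω => pinv F1 (U ω)) ℙ)
    (hvar2 : 0 < variance (fun ω => pinv F2 (U ω)) ℙ) :
    let X1 : Ω → ℝ := fun ω => if B1 ω then pinv F1 (U ω) else pinv F1 (1 - U ω)
    let X2 : Ω → ℝ := fun ω => if B2 ω then pinv F2 (U ω) else pinv F2 (1 - U ω)
    corr X1 X2 =
      lam * corr (fun ω => pinv F1 (U ω)) (fun ω => pinv F2 (U ω)) +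
      (1 - lam) * corr (fun ω => pinv F1 (U ω)) (fun ω => pinv F2 (1 - U ω)) := by
  intro X1 X2
  -- measurable representatives of the pseudoinverses
  have hA1 := pinv_aemeasurable hmono1 hbot1 htop1
  have hA2 := pinv_aemeasurable hmono2 hbot2 htop2
  obtain ⟨G1, hG1m, hG1e⟩ : ∃ G : ℝ → ℝ, Measurable G ∧
      pinv F1 =ᵐ[volume.restrict (Set.Icc (0:ℝ) 1)] G :=
    ⟨hA1.mk _, hA1.measurable_mk, hA1.ae_eq_mk⟩
  obtain ⟨G2, hG2m, hG2e⟩ : ∃ G : ℝ → ℝ, Measurable G ∧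
      pinv F2 =ᵐ[volume.restrict (Set.Icc (0:ℝ) 1)] G :=
    ⟨hA2.mk _, hA2.measurable_mk, hA2.ae_eq_mk⟩
  have hU'm : Measurable (fun ω => 1 - U ω) := by fun_prop
  have hU'dist : Measure.map (fun ω => 1 - U ω) ℙ = volume.restrict (Set.Icc (0:ℝ) 1) := by
    have hc : (fun ω => 1 - U ω) = (fun x : ℝ => 1 - x) ∘ U := rfl
    rw [hc, ← Measure.map_map (by fun_prop) hU, hUdist, map_one_sub_restrict]
  -- transfer of integrals to [0,1]
  have htU : ∀ ψ : ℝ → ℝ, Measurable ψ →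
      ∫ ω, ψ (U ω) ∂ℙ = ∫ u, ψ u ∂(volume.restrict (Set.Icc (0:ℝ) 1)) := by
    intro ψ hψ
    rw [← hUdist]
    exact (integral_map hU.aemeasurable hψ.aestronglyMeasurable).symm
  have htU' : ∀ ψ : ℝ → ℝ, Measurable ψ →
      ∫ ω, ψ (1 - U ω) ∂ℙ = ∫ u, ψ u ∂(volume.restrict (Set.Icc (0:ℝ) 1)) := by
    intro ψ hψ
    rw [← hU'dist]
    exact (integral_map hU'm.aemeasurable hψ.aestronglyMeasurable).symm
  have hflip : ∀ ψ : ℝ → ℝ, Measurable ψ →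
      ∫ u, ψ (1 - u) ∂(volume.restrict (Set.Icc (0:ℝ) 1))
        = ∫ u, ψ u ∂(volume.restrict (Set.Icc (0:ℝ) 1)) := by
    intro ψ hψ
    conv_rhs => rw [← map_one_sub_restrict]
    exact (integral_map (by fun_prop) hψ.aestronglyMeasurable).symm
  -- a.e. equalities
  have hG1eU : pinv F1 =ᵐ[Measure.map U ℙ] G1 := by rw [hUdist]; exact hG1e
  have hG2eU : pinv F2 =ᵐ[Measure.map U ℙ] G2 := by rw [hUdist]; exact hG2e
  have hG1eU' : pinv F1 =ᵐ[Measure.map (fun ω => 1 - U ω) ℙ] G1 := by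
    rw [hU'dist]; exact hG1e
  have hG2eU' : pinv F2 =ᵐ[Measure.map (fun ω => 1 - U ω) ℙ] G2 := by
    rw [hU'dist]; exact hG2e
  have he1 : (fun ω => pinv F1 (U ω)) =ᵐ[ℙ] fun ω => G1 (U ω) :=
    ae_eq_comp hU.aemeasurable hG1eU
  have he1' : (fun ω => pinv F1 (1 - U ω)) =ᵐ[ℙ] fun ω => G1 (1 - U ω) :=
    ae_eq_comp hU'm.aemeasurable hG1eU'
  have he2 : (fun ω => pinv F2 (U ω)) =ᵐ[ℙ] fun ω => G2 (U ω) :=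
    ae_eq_comp hU.aemeasurable hG2eU
  have he2' : (fun ω => pinv F2 (1 - U ω)) =ᵐ[ℙ] fun ω => G2 (1 - U ω) :=
    ae_eq_comp hU'm.aemeasurable hG2eU'
  -- MemLp facts
  have hM1U : MemLp (fun ω => G1 (U ω)) 2 ℙ := hL2₁.ae_eq he1
  have hM2U : MemLp (fun ω => G2 (U ω)) 2 ℙ := hL2₂.ae_eq he2
  have hM1ν : MemLp G1 2 (volume.restrict (Set.Icc (0:ℝ) 1)) := by
    have h := (memLp_map_measure_iff (f := U)
      (by rw [hUdist]; exact hG1m.aestronglyMeasurable) hU.aemeasurable).mpr hM1U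
    rwa [hUdist] at h
  have hM2ν : MemLp G2 2 (volume.restrict (Set.Icc (0:ℝ) 1)) := by
    have h := (memLp_map_measure_iff (f := U)
      (by rw [hUdist]; exact hG2m.aestronglyMeasurable) hU.aemeasurable).mpr hM2U
    rwa [hUdist] at h
  have hM1U' : MemLp (fun ω => G1 (1 - U ω)) 2 ℙ :=
    (memLp_map_measure_iff (f := fun ω => 1 - U ω)
      (by rw [hU'dist]; exact hG1m.aestronglyMeasurable) hU'm.aemeasurable).mp
      (by rwa [hU'dist])
  have hM2U' : MemLp (fun ω => G2 (1 - U ω)) 2 ℙ :=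
    (memLp_map_measure_iff (f := fun ω => 1 - U ω)
      (by rw [hU'dist]; exact hG2m.aestronglyMeasurable) hU'm.aemeasurable).mp
      (by rwa [hU'dist])
  -- events
  have hEmeas : ∀ b1 b2 : Bool, MeasurableSet {ω | B1 ω = b1 ∧ B2 ω = b2} := fun b1 b2 =>
    (hB1 (measurableSet_singleton b1)).inter (hB2 (measurableSet_singleton b2))
  -- key indicator integral
  have hkey : ∀ (b1 b2 : Bool) (ψ : ℝ → ℝ), Measurable ψ →
      ∫ ω, (if B1 ω = b1 ∧ B2 ω = b2 then ψ (U ω) else 0) ∂ℙ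
        = (ℙ {ω | B1 ω = b1 ∧ B2 ω = b2}).toReal
            * ∫ u, ψ u ∂(volume.restrict (Set.Icc (0:ℝ) 1)) := by
    intro b1 b2 ψ hψ
    have hφm : Measurable (fun p : Bool × Bool => if p = (b1, b2) then (1:ℝ) else 0) :=
      measurable_of_countable _
    have hind : IndepFun (fun ω => if (B1 ω, B2 ω) = (b1, b2) then (1:ℝ) else 0)
        (fun ω => ψ (U ω)) ℙ := hindep.comp hφm hψ
    have heq : (fun ω => if B1 ω = b1 ∧ B2 ω = b2 then ψ (U ω) else 0)
        = fun ω => (if (B1 ω, B2 ω) = (b1, b2) then (1:ℝ) else 0) * ψ (U ω) := by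
      ext ω
      by_cases h : B1 ω = b1 ∧ B2 ω = b2 <;> simp [h, Prod.ext_iff]
    rw [heq, hind.integral_fun_mul_eq_mul_integral ((hφm.comp (hB1.prodMk hB2)).aestronglyMeasurable)
      ((hψ.comp hU).aestronglyMeasurable)]
    congr 1
    · have h2 : (fun ω => if (B1 ω, B2 ω) = (b1, b2) then (1:ℝ) else 0)
          = Set.indicator {ω | B1 ω = b1 ∧ B2 ω = b2} (fun _ => (1:ℝ)) := by
        ext ω
        by_cases h : B1 ω = b1 ∧ B2 ω = b2 <;> simp [Set.indicator_apply, h, Prod.ext_iff]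
      rw [h2]
      exact integral_indicator_one (hEmeas b1 b2)
    · exact htU ψ hψ
  -- master decomposition
  have hmaster : ∀ ψ : Bool → Bool → ℝ → ℝ, (∀ b1 b2, Measurable (ψ b1 b2)) →
      (∀ b1 b2, Integrable (fun ω => ψ b1 b2 (U ω)) ℙ) →
      ∫ ω, ψ (B1 ω) (B2 ω) (U ω) ∂ℙ
        = (ℙ {ω | B1 ω = true ∧ B2 ω = true}).toReal
            * (∫ u, ψ true true u ∂(volume.restrict (Set.Icc (0:ℝ) 1)))
        + (ℙ {ω | B1 ω = true ∧ B2 ω = false}).toReal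
            * (∫ u, ψ true false u ∂(volume.restrict (Set.Icc (0:ℝ) 1)))
        + (ℙ {ω | B1 ω = false ∧ B2 ω = true}).toReal
            * (∫ u, ψ false true u ∂(volume.restrict (Set.Icc (0:ℝ) 1)))
        + (ℙ {ω | B1 ω = false ∧ B2 ω = false}).toReal
            * (∫ u, ψ false false u ∂(volume.restrict (Set.Icc (0:ℝ) 1))) := by
    intro ψ hm hint
    have hI : ∀ b1 b2 : Bool,
        Integrable (fun ω => if B1 ω = b1 ∧ B2 ω = b2 then ψ b1 b2 (U ω) else 0) ℙ := by
      intro b1 b2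
      refine ((hint b1 b2).indicator (hEmeas b1 b2)).congr
        (Filter.Eventually.of_forall fun ω => ?_)
      by_cases h : B1 ω = b1 ∧ B2 ω = b2 <;> simp [Set.indicator_apply, h]
    have hpt : (fun ω => ψ (B1 ω) (B2 ω) (U ω)) = fun ω =>
        (if B1 ω = true ∧ B2 ω = true then ψ true true (U ω) else 0)
      + (if B1 ω = true ∧ B2 ω = false then ψ true false (U ω) else 0)
      + (if B1 ω = false ∧ B2 ω = true then ψ false true (U ω) else 0)
      + (if B1 ω = false ∧ B2 ω = false then ψ false false (U ω) else 0) := by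
      ext ω; cases h1 : B1 ω <;> cases h2 : B2 ω <;> simp [h1, h2]
    have hI2 : Integrable (fun ω =>
        (if B1 ω = true ∧ B2 ω = true then ψ true true (U ω) else 0)
      + (if B1 ω = true ∧ B2 ω = false then ψ true false (U ω) else 0)) ℙ :=
      (hI true true).add (hI true false)
    have hI3 : Integrable (fun ω =>
        (if B1 ω = true ∧ B2 ω = true then ψ true true (U ω) else 0)
      + (if B1 ω = true ∧ B2 ω = false then ψ true false (U ω) else 0)
      + (if B1 ω = false ∧ B2 ω = true then ψ false true (U ω) else 0)) ℙ :=
      hI2.add (hI false true)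
    rw [hpt, integral_add hI3 (hI false false), integral_add hI2 (hI false true),
      integral_add (hI true true) (hI true false),
      hkey true true _ (hm true true), hkey true false _ (hm true false),
      hkey false true _ (hm false true), hkey false false _ (hm false false)]
  -- probability identities
  have hsetSame : {ω | B1 ω = B2 ω}
      = {ω | B1 ω = true ∧ B2 ω = true} ∪ {ω | B1 ω = false ∧ B2 ω = false} := by
    ext ω; cases h1 : B1 ω <;> cases h2 : B2 ω <;> simp [h1, h2]
  have hdisj1 : Disjoint {ω | B1 ω = true ∧ B2 ω = true}
      {ω | B1 ω = false ∧ B2 ω = false} := by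
    rw [Set.disjoint_left]
    rintro ω ⟨h1, -⟩ ⟨h2, -⟩
    rw [h1] at h2
    exact Bool.noConfusion h2
  have hPsame : (ℙ {ω | B1 ω = true ∧ B2 ω = true}).toReal
      + (ℙ {ω | B1 ω = false ∧ B2 ω = false}).toReal = lam := by
    have h := hconc
    rw [hsetSame, measure_union hdisj1 (hEmeas false false)] at h
    have h2 := congrArg ENNReal.toReal h
    rwa [ENNReal.toReal_add (measure_ne_top _ _) (measure_ne_top _ _),
      ENNReal.toReal_ofReal hlam.1] at h2
  have hsetDiff : {ω | B1 ω = B2 ω}ᶜ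
      = {ω | B1 ω = true ∧ B2 ω = false} ∪ {ω | B1 ω = false ∧ B2 ω = true} := by
    ext ω; cases h1 : B1 ω <;> cases h2 : B2 ω <;> simp [h1, h2]
  have hdisj2 : Disjoint {ω | B1 ω = true ∧ B2 ω = false}
      {ω | B1 ω = false ∧ B2 ω = true} := by
    rw [Set.disjoint_left]
    rintro ω ⟨h1, -⟩ ⟨h2, -⟩
    rw [h1] at h2
    exact Bool.noConfusion h2
  have hPdiff : (ℙ {ω | B1 ω = true ∧ B2 ω = false}).toReal
      + (ℙ {ω | B1 ω = false ∧ B2 ω = true}).toReal = 1 - lam := by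
    have hms : MeasurableSet {ω | B1 ω = B2 ω} := by
      rw [hsetSame]; exact (hEmeas true true).union (hEmeas false false)
    have hc : ℙ {ω | B1 ω = B2 ω}ᶜ = 1 - ENNReal.ofReal lam := by
      rw [prob_compl_eq_one_sub hms, hconc]
    rw [hsetDiff, measure_union hdisj2 (hEmeas false true)] at hc
    have h2 := congrArg ENNReal.toReal hc
    rwa [ENNReal.toReal_add (measure_ne_top _ _) (measure_ne_top _ _),
      ENNReal.toReal_sub_of_le (ENNReal.ofReal_le_one.mpr hlam.2) ENNReal.one_ne_top,
      ENNReal.toReal_one, ENNReal.toReal_ofReal hlam.1] at h2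
  -- flip identities on [0,1]
  have hflip1 : ∫ u, G1 (1 - u) ∂(volume.restrict (Set.Icc (0:ℝ) 1))
      = ∫ u, G1 u ∂(volume.restrict (Set.Icc (0:ℝ) 1)) := hflip G1 hG1m
  have hflip2 : ∫ u, G2 (1 - u) ∂(volume.restrict (Set.Icc (0:ℝ) 1))
      = ∫ u, G2 u ∂(volume.restrict (Set.Icc (0:ℝ) 1)) := hflip G2 hG2m
  have hflipA : ∫ u, G1 (1 - u) * G2 (1 - u) ∂(volume.restrict (Set.Icc (0:ℝ) 1))
      = ∫ u, G1 u * G2 u ∂(volume.restrict (Set.Icc (0:ℝ) 1)) :=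
    hflip (fun u => G1 u * G2 u) (by fun_prop)
  have hflipJ : ∫ u, G1 (1 - u) * G2 u ∂(volume.restrict (Set.Icc (0:ℝ) 1))
      = ∫ u, G1 u * G2 (1 - u) ∂(volume.restrict (Set.Icc (0:ℝ) 1)) := by
    have h := hflip (fun u => G1 u * G2 (1 - u)) (by fun_prop)
    simpa using h
  have hflipsq1 : ∫ u, G1 (1 - u) ^ 2 ∂(volume.restrict (Set.Icc (0:ℝ) 1))
      = ∫ u, G1 u ^ 2 ∂(volume.restrict (Set.Icc (0:ℝ) 1)) :=
    hflip (fun u => G1 u ^ 2) (by fun_prop)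
  have hflipsq2 : ∫ u, G2 (1 - u) ^ 2 ∂(volume.restrict (Set.Icc (0:ℝ) 1))
      = ∫ u, G2 u ^ 2 ∂(volume.restrict (Set.Icc (0:ℝ) 1)) :=
    hflip (fun u => G2 u ^ 2) (by fun_prop)
  -- a.e. identification of X1 X2 with measurable versions
  have hX1e : X1 =ᵐ[ℙ] fun ω => if B1 ω then G1 (U ω) else G1 (1 - U ω) := by
    filter_upwards [he1, he1'] with ω h h'
    show (if B1 ω then pinv F1 (U ω) else pinv F1 (1 - U ω)) = _
    by_cases hb : B1 ω = true <;> simp [hb, h, h']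
  have hX2e : X2 =ᵐ[ℙ] fun ω => if B2 ω then G2 (U ω) else G2 (1 - U ω) := by
    filter_upwards [he2, he2'] with ω h h'
    show (if B2 ω then pinv F2 (U ω) else pinv F2 (1 - U ω)) = _
    by_cases hb : B2 ω = true <;> simp [hb, h, h']
  -- expectation of X1
  have hIX1 : ∫ ω, X1 ω ∂ℙ = ∫ u, G1 u ∂(volume.restrict (Set.Icc (0:ℝ) 1)) := by
    rw [integral_congr_ae hX1e]
    have h : ∫ ω, (if B1 ω then G1 (U ω) else G1 (1 - U ω)) ∂ℙ
        = (ℙ {ω | B1 ω = true ∧ B2 ω = true}).toReal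
            * (∫ u, G1 u ∂(volume.restrict (Set.Icc (0:ℝ) 1)))
        + (ℙ {ω | B1 ω = true ∧ B2 ω = false}).toReal
            * (∫ u, G1 u ∂(volume.restrict (Set.Icc (0:ℝ) 1)))
        + (ℙ {ω | B1 ω = false ∧ B2 ω = true}).toReal
            * (∫ u, G1 (1 - u) ∂(volume.restrict (Set.Icc (0:ℝ) 1)))
        + (ℙ {ω | B1 ω = false ∧ B2 ω = false}).toReal
            * (∫ u, G1 (1 - u) ∂(volume.restrict (Set.Icc (0:ℝ) 1))) := by
      exact hmaster (fun b1 _ u => if b1 then G1 u else G1 (1 - u))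
        (fun b1 b2 => by cases b1 <;> simp only [reduceIte, Bool.false_eq_true, if_false] <;> fun_prop)
        (fun b1 b2 => by
          cases b1
          · exact hM1U'.integrable one_le_two
          · exact hM1U.integrable one_le_two)
    rw [h, hflip1]
    linear_combination (∫ u, G1 u ∂(volume.restrict (Set.Icc (0:ℝ) 1))) * hPsame
      + (∫ u, G1 u ∂(volume.restrict (Set.Icc (0:ℝ) 1))) * hPdiff
  -- expectation of X2
  have hIX2 : ∫ ω, X2 ω ∂ℙ = ∫ u, G2 u ∂(volume.restrict (Set.Icc (0:ℝ) 1)) := by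
    rw [integral_congr_ae hX2e]
    have h : ∫ ω, (if B2 ω then G2 (U ω) else G2 (1 - U ω)) ∂ℙ
        = (ℙ {ω | B1 ω = true ∧ B2 ω = true}).toReal * (∫ u, G2 u ∂(volume.restrict (Set.Icc (0:ℝ) 1)))
        + (ℙ {ω | B1 ω = true ∧ B2 ω = false}).toReal * (∫ u, G2 (1 - u) ∂(volume.restrict (Set.Icc (0:ℝ) 1)))
        + (ℙ {ω | B1 ω = false ∧ B2 ω = true}).toReal * (∫ u, G2 u ∂(volume.restrict (Set.Icc (0:ℝ) 1)))
        + (ℙ {ω | B1 ω = false ∧ B2 ω = false}).toReal * (∫ u, G2 (1 - u) ∂(volume.restrict (Set.Icc (0:ℝ) 1))) := by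
      exact hmaster (fun _ b2 u => if b2 then G2 u else G2 (1 - u))
        (fun b1 b2 => by cases b2 <;> simp only [reduceIte, Bool.false_eq_true, if_false] <;> fun_prop)
        (fun b1 b2 => by
          cases b2
          · exact hM2U'.integrable one_le_two
          · exact hM2U.integrable one_le_two)
    rw [h, hflip2]
    linear_combination (∫ u, G2 u ∂(volume.restrict (Set.Icc (0:ℝ) 1))) * hPsame + (∫ u, G2 u ∂(volume.restrict (Set.Icc (0:ℝ) 1))) * hPdiff
  -- expectation of the product
  have hIX1X2 : ∫ ω, X1 ω * X2 ω ∂ℙ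
      = lam * (∫ u, G1 u * G2 u ∂(volume.restrict (Set.Icc (0:ℝ) 1))) + (1 - lam) * (∫ u, G1 u * G2 (1 - u) ∂(volume.restrict (Set.Icc (0:ℝ) 1))) := by
    rw [integral_congr_ae (f := fun ω => X1 ω * X2 ω) (g := fun ω => (if B1 ω then G1 (U ω) else G1 (1 - U ω)) * (if B2 ω then G2 (U ω) else G2 (1 - U ω))) (hX1e.mul hX2e)]
    have h : ∫ ω, (if B1 ω then G1 (U ω) else G1 (1 - U ω))
          * (if B2 ω then G2 (U ω) else G2 (1 - U ω)) ∂ℙ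
        = (ℙ {ω | B1 ω = true ∧ B2 ω = true}).toReal * (∫ u, G1 u * G2 u ∂(volume.restrict (Set.Icc (0:ℝ) 1)))
        + (ℙ {ω | B1 ω = true ∧ B2 ω = false}).toReal * (∫ u, G1 u * G2 (1 - u) ∂(volume.restrict (Set.Icc (0:ℝ) 1)))
        + (ℙ {ω | B1 ω = false ∧ B2 ω = true}).toReal * (∫ u, G1 (1 - u) * G2 u ∂(volume.restrict (Set.Icc (0:ℝ) 1)))
        + (ℙ {ω | B1 ω = false ∧ B2 ω = false}).toReal
            * (∫ u, G1 (1 - u) * G2 (1 - u) ∂(volume.restrict (Set.Icc (0:ℝ) 1))) := by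
      exact hmaster
        (fun b1 b2 u => (if b1 then G1 u else G1 (1 - u)) * (if b2 then G2 u else G2 (1 - u)))
        (fun b1 b2 => by
          cases b1 <;> cases b2 <;> simp only [reduceIte, Bool.false_eq_true, if_false] <;> fun_prop)
        (fun b1 b2 => by
          cases b1 <;> cases b2
          · exact integrable_mul_of_memℒp_two hM1U' hM2U'
          · exact integrable_mul_of_memℒp_two hM1U' hM2U
          · exact integrable_mul_of_memℒp_two hM1U hM2U'
          · exact integrable_mul_of_memℒp_two hM1U hM2U)
    rw [h, hflipA, hflipJ]
    linear_combination (∫ u, G1 u * G2 u ∂(volume.restrict (Set.Icc (0:ℝ) 1))) * hPsame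
      + (∫ u, G1 u * G2 (1 - u) ∂(volume.restrict (Set.Icc (0:ℝ) 1))) * hPdiff
  -- variance of X1
  have hS1 : MeasurableSet {ω | B1 ω = true} := hB1 (measurableSet_singleton true)
  have hMX1' : MemLp (fun ω => if B1 ω then G1 (U ω) else G1 (1 - U ω)) 2 ℙ := by
    have hpt : (fun ω => if B1 ω then G1 (U ω) else G1 (1 - U ω))
        = fun ω => Set.indicator {ω | B1 ω = true} (fun ω => G1 (U ω)) ω
          + Set.indicator {ω | B1 ω = true}ᶜ (fun ω => G1 (1 - U ω)) ω := by
      ext ω; by_cases hb : B1 ω = true <;> simp [Set.indicator_apply, hb]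
    rw [hpt]
    exact (hM1U.indicator hS1).add (hM1U'.indicator hS1.compl)
  have hMX1 : MemLp X1 2 ℙ := hMX1'.ae_eq hX1e.symm
  have hS2 : MeasurableSet {ω | B2 ω = true} := hB2 (measurableSet_singleton true)
  have hMX2' : MemLp (fun ω => if B2 ω then G2 (U ω) else G2 (1 - U ω)) 2 ℙ := by
    have hpt : (fun ω => if B2 ω then G2 (U ω) else G2 (1 - U ω))
        = fun ω => Set.indicator {ω | B2 ω = true} (fun ω => G2 (U ω)) ω
          + Set.indicator {ω | B2 ω = true}ᶜ (fun ω => G2 (1 - U ω)) ω := by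
      ext ω; by_cases hb : B2 ω = true <;> simp [Set.indicator_apply, hb]
    rw [hpt]
    exact (hM2U.indicator hS2).add (hM2U'.indicator hS2.compl)
  have hMX2 : MemLp X2 2 ℙ := hMX2'.ae_eq hX2e.symm
  have hVX1 : variance X1 ℙ = (∫ u, G1 u ^ 2 ∂(volume.restrict (Set.Icc (0:ℝ) 1))) - (∫ u, G1 u ∂(volume.restrict (Set.Icc (0:ℝ) 1))) ^ 2 := by
    rw [variance_eq_sub hMX1]
    simp only [Pi.pow_apply]
    rw [hIX1]
    congr 1
    have hsq : (fun ω => X1 ω ^ 2) =ᵐ[ℙ]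
        fun ω => (if B1 ω then G1 (U ω) else G1 (1 - U ω)) ^ 2 := by
      filter_upwards [hX1e] with ω h; rw [h]
    rw [integral_congr_ae hsq]
    have h : ∫ ω, (if B1 ω then G1 (U ω) else G1 (1 - U ω)) ^ 2 ∂ℙ
        = (ℙ {ω | B1 ω = true ∧ B2 ω = true}).toReal * (∫ u, G1 u ^ 2 ∂(volume.restrict (Set.Icc (0:ℝ) 1)))
        + (ℙ {ω | B1 ω = true ∧ B2 ω = false}).toReal * (∫ u, G1 u ^ 2 ∂(volume.restrict (Set.Icc (0:ℝ) 1)))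
        + (ℙ {ω | B1 ω = false ∧ B2 ω = true}).toReal * (∫ u, G1 (1 - u) ^ 2 ∂(volume.restrict (Set.Icc (0:ℝ) 1)))
        + (ℙ {ω | B1 ω = false ∧ B2 ω = false}).toReal * (∫ u, G1 (1 - u) ^ 2 ∂(volume.restrict (Set.Icc (0:ℝ) 1))) := by
      exact hmaster (fun b1 _ u => (if b1 then G1 u else G1 (1 - u)) ^ 2)
        (fun b1 b2 => by cases b1 <;> simp only [reduceIte, Bool.false_eq_true, if_false] <;> fun_prop)
        (fun b1 b2 => by
          cases b1
          · exact hM1U'.integrable_sq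
          · exact hM1U.integrable_sq)
    rw [h, hflipsq1]
    linear_combination (∫ u, G1 u ^ 2 ∂(volume.restrict (Set.Icc (0:ℝ) 1))) * hPsame + (∫ u, G1 u ^ 2 ∂(volume.restrict (Set.Icc (0:ℝ) 1))) * hPdiff
  have hVX2 : variance X2 ℙ = (∫ u, G2 u ^ 2 ∂(volume.restrict (Set.Icc (0:ℝ) 1))) - (∫ u, G2 u ∂(volume.restrict (Set.Icc (0:ℝ) 1))) ^ 2 := by
    rw [variance_eq_sub hMX2]
    simp only [Pi.pow_apply]
    rw [hIX2]
    congr 1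
    have hsq : (fun ω => X2 ω ^ 2) =ᵐ[ℙ]
        fun ω => (if B2 ω then G2 (U ω) else G2 (1 - U ω)) ^ 2 := by
      filter_upwards [hX2e] with ω h; rw [h]
    rw [integral_congr_ae hsq]
    have h : ∫ ω, (if B2 ω then G2 (U ω) else G2 (1 - U ω)) ^ 2 ∂ℙ
        = (ℙ {ω | B1 ω = true ∧ B2 ω = true}).toReal * (∫ u, G2 u ^ 2 ∂(volume.restrict (Set.Icc (0:ℝ) 1)))
        + (ℙ {ω | B1 ω = true ∧ B2 ω = false}).toReal * (∫ u, G2 (1 - u) ^ 2 ∂(volume.restrict (Set.Icc (0:ℝ) 1)))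
        + (ℙ {ω | B1 ω = false ∧ B2 ω = true}).toReal * (∫ u, G2 u ^ 2 ∂(volume.restrict (Set.Icc (0:ℝ) 1)))
        + (ℙ {ω | B1 ω = false ∧ B2 ω = false}).toReal * (∫ u, G2 (1 - u) ^ 2 ∂(volume.restrict (Set.Icc (0:ℝ) 1))) := by
      exact hmaster (fun _ b2 u => (if b2 then G2 u else G2 (1 - u)) ^ 2)
        (fun b1 b2 => by cases b2 <;> simp only [reduceIte, Bool.false_eq_true, if_false] <;> fun_prop)
        (fun b1 b2 => by
          cases b2
          · exact hM2U'.integrable_sq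
          · exact hM2U.integrable_sq)
    rw [h, hflipsq2]
    linear_combination (∫ u, G2 u ^ 2 ∂(volume.restrict (Set.Icc (0:ℝ) 1))) * hPsame + (∫ u, G2 u ^ 2 ∂(volume.restrict (Set.Icc (0:ℝ) 1))) * hPdiff
  -- quantities for the right-hand side
  have hIg1 : ∫ ω, pinv F1 (U ω) ∂ℙ = ∫ u, G1 u ∂(volume.restrict (Set.Icc (0:ℝ) 1)) := by
    rw [integral_congr_ae he1]; exact htU G1 hG1m
  have hIg2 : ∫ ω, pinv F2 (U ω) ∂ℙ = ∫ u, G2 u ∂(volume.restrict (Set.Icc (0:ℝ) 1)) := by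
    rw [integral_congr_ae he2]; exact htU G2 hG2m
  have hIg2' : ∫ ω, pinv F2 (1 - U ω) ∂ℙ = ∫ u, G2 u ∂(volume.restrict (Set.Icc (0:ℝ) 1)) := by
    rw [integral_congr_ae he2']; exact htU' G2 hG2m
  have hIg1g2 : ∫ ω, pinv F1 (U ω) * pinv F2 (U ω) ∂ℙ = ∫ u, G1 u * G2 u ∂(volume.restrict (Set.Icc (0:ℝ) 1)) := by
    rw [integral_congr_ae (f := fun ω => pinv F1 (U ω) * pinv F2 (U ω)) (g := fun ω => G1 (U ω) * G2 (U ω)) (he1.mul he2)]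
    exact htU (fun u => G1 u * G2 u) (by fun_prop)
  have hIg1g2' : ∫ ω, pinv F1 (U ω) * pinv F2 (1 - U ω) ∂ℙ
      = ∫ u, G1 u * G2 (1 - u) ∂(volume.restrict (Set.Icc (0:ℝ) 1)) := by
    rw [integral_congr_ae (f := fun ω => pinv F1 (U ω) * pinv F2 (1 - U ω)) (g := fun ω => G1 (U ω) * G2 (1 - U ω)) (he1.mul he2')]
    exact htU (fun u => G1 u * G2 (1 - u)) (by fun_prop)
  have hVg1 : variance (fun ω => pinv F1 (U ω)) ℙ
      = (∫ u, G1 u ^ 2 ∂(volume.restrict (Set.Icc (0:ℝ) 1))) - (∫ u, G1 u ∂(volume.restrict (Set.Icc (0:ℝ) 1))) ^ 2 := by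
    rw [variance_eq_sub hL2₁]
    simp only [Pi.pow_apply]
    rw [hIg1]
    congr 1
    rw [integral_congr_ae (show (fun ω => pinv F1 (U ω) ^ 2) =ᵐ[ℙ] fun ω => G1 (U ω) ^ 2 from by
      filter_upwards [he1] with ω h; rw [h])]
    exact htU (fun u => G1 u ^ 2) (by fun_prop)
  have hVg2 : variance (fun ω => pinv F2 (U ω)) ℙ
      = (∫ u, G2 u ^ 2 ∂(volume.restrict (Set.Icc (0:ℝ) 1))) - (∫ u, G2 u ∂(volume.restrict (Set.Icc (0:ℝ) 1))) ^ 2 := by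
    rw [variance_eq_sub hL2₂]
    simp only [Pi.pow_apply]
    rw [hIg2]
    congr 1
    rw [integral_congr_ae (show (fun ω => pinv F2 (U ω) ^ 2) =ᵐ[ℙ] fun ω => G2 (U ω) ^ 2 from by
      filter_upwards [he2] with ω h; rw [h])]
    exact htU (fun u => G2 u ^ 2) (by fun_prop)
  have hVg2' : variance (fun ω => pinv F2 (1 - U ω)) ℙ
      = (∫ u, G2 u ^ 2 ∂(volume.restrict (Set.Icc (0:ℝ) 1))) - (∫ u, G2 u ∂(volume.restrict (Set.Icc (0:ℝ) 1))) ^ 2 := by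
    have hM : MemLp (fun ω => pinv F2 (1 - U ω)) 2 ℙ := hM2U'.ae_eq he2'.symm
    rw [variance_eq_sub hM]
    simp only [Pi.pow_apply]
    rw [hIg2']
    congr 1
    rw [integral_congr_ae (show (fun ω => pinv F2 (1 - U ω) ^ 2) =ᵐ[ℙ]
        fun ω => G2 (1 - U ω) ^ 2 from by filter_upwards [he2'] with ω h; rw [h])]
    exact htU' (fun u => G2 u ^ 2) (by fun_prop)
  -- final assembly
  simp only [corr]
  rw [hIX1X2, hIX1, hIX2, hVX1, hVX2, hIg1g2, hIg1, hIg2, hVg1, hVg2, hIg1g2', hIg2', hVg2']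
  rw [← mul_div_assoc, ← mul_div_assoc, ← add_div]
  congr 1
  ring
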